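/- Let N ≥ d_t = dim(P_t(S^d)), and suppose X_N = {x_1,...,x_N} ⊂ S^d is a fundamental system for P_t(S^d). Then C_t(X_N) = 0 if and only if X_N is a spherical t-design, where C_t(X_N) = E G_t(X_N) e with G_t = Y_t^T Y_t the Gram matrix of the spherical harmonics evaluation matrix, E = [e, −I_{N−1}] ∈ R^{(N−1)×N}, and e = (1,...,1)^T ∈ R^N. -/

import Mathlib

open MeasureTheory Finset Matrix

noncomputable section

/-- Euclidean space `ℝ^{d+1}`. -/
abbrev Esp (d : ℕ) := EuclideanSpace ℝ (Fin (d + 1))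

/-- The unit sphere `S^d ⊂ ℝ^{d+1}`. -/
abbrev Sd (d : ℕ) := Metric.sphere (0 : Esp d) 1

/-- The surface measure on `S^d`. -/
def sphMeasure (d : ℕ) : Measure (Sd d) := (volume : Measure (Esp d)).toSphere

/-- The surface area `ω_d` of `S^d`. -/
def omega (d : ℕ) : ℝ := (sphMeasure d Set.univ).toReal

/-- `f : S^d → ℝ` is the restriction of a polynomial of degree at most `t`. -/
def IsPt (d t : ℕ) (f : Sd d → ℝ) : Prop :=
  ∃ P : MvPolynomial (Fin (d + 1)) ℝ, P.totalDegree ≤ t ∧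
    ∀ x : Sd d, f x = MvPolynomial.eval (fun i => (x : Esp d) i) P

/-- `X` is a spherical `t`-design. -/
def IsDesign (d t N : ℕ) (X : Fin N → Sd d) : Prop :=
  ∀ f : Sd d → ℝ, IsPt d t f →
    (∑ j, f (X j)) / (N : ℝ) = (∫ x, f x ∂(sphMeasure d)) / omega d

/-- `M(d,ℓ)`, the dimension of the space of degree-`ℓ` spherical harmonics on `S^d`. -/
def Mdim (d ℓ : ℕ) : ℕ := (2 * ℓ + d - 1) * Nat.factorial (ℓ + d - 2) /
    (Nat.factorial (d - 1) * Nat.factorial ℓ)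

/-- `X` is a fundamental system for `P_t(S^d)`. -/
def IsFundamental (d t N : ℕ) (X : Fin N → Sd d) : Prop :=
  ∀ f : Sd d → ℝ, IsPt d t f → (∀ j, f (X j) = 0) → ∀ x, f x = 0

/-- The hypotheses that `Y ℓ k`, `k < M(d,ℓ)`, `ℓ ≤ t`, form an orthonormal basis of real
spherical harmonics for `P_t(S^d)`, with `Y 0 0` the constant `1/√ω_d`. -/
structure IsONBHarmonics (d t : ℕ) (Y : ℕ → ℕ → Sd d → ℝ) : Prop where
  poly : ∀ ℓ ≤ t, ∀ k < Mdim d ℓ, IsPt d ℓ (Y ℓ k)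
  ortho : ∀ ℓ ≤ t, ∀ ℓ' ≤ t, ∀ k < Mdim d ℓ, ∀ k' < Mdim d ℓ',
    ∫ x, Y ℓ k x * Y ℓ' k' x ∂(sphMeasure d) = if ℓ = ℓ' ∧ k = k' then 1 else 0
  span : ∀ f : Sd d → ℝ, IsPt d t f → ∃ c : ℕ → ℕ → ℝ,
    ∀ x, f x = ∑ ℓ ∈ range (t + 1), ∑ k ∈ range (Mdim d ℓ), c ℓ k * Y ℓ k x
  const : ∀ x, Y 0 0 x = 1 / Real.sqrt (omega d)

/-- Row index set for the matrix `Y_t`: pairs `(ℓ, k)` with `ℓ ≤ t`, `k < M(d,ℓ)`. -/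
abbrev HIdx (d t : ℕ) := (ℓ : Fin (t + 1)) × Fin (Mdim d ℓ.1)

/-- The spherical harmonic evaluation matrix `Y_t ∈ ℝ^{d_t × N}`. -/
def Ymat (d t N : ℕ) (Y : ℕ → ℕ → Sd d → ℝ) (X : Fin N → Sd d) :
    Matrix (HIdx d t) (Fin N) ℝ :=
  fun p j => Y p.1.1 p.2.1 (X j)

/-- The Gram matrix `G_t = Y_tᵀ Y_t`. -/
def Gmat (d t N : ℕ) (Y : ℕ → ℕ → Sd d → ℝ) (X : Fin N → Sd d) :
    Matrix (Fin N) (Fin N) ℝ :=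
  (Ymat d t N Y X)ᵀ * Ymat d t N Y X

/-- The vector `C_t(X_N) ∈ ℝ^{N-1}`, `(C_t)_i = (G_t e)_1 - (G_t e)_{i+1}`. -/
def Cvec (d t N : ℕ) (Y : ℕ → ℕ → Sd d → ℝ) (X : Fin N → Sd d) :
    Fin (N - 1) → ℝ :=
  fun i =>
    (Gmat d t N Y X).mulVec (fun _ => 1) ⟨0, by have := i.2; omega⟩ -
      (Gmat d t N Y X).mulVec (fun _ => 1) ⟨i.1 + 1, by have := i.2; omega⟩

/-! ### Auxiliary lemmas -/

instance sphMeasure_finite (d : ℕ) : IsFiniteMeasure (sphMeasure d) := by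
  unfold sphMeasure; infer_instance

lemma sd_nonempty (d : ℕ) : Nonempty (Sd d) :=
  ⟨⟨EuclideanSpace.single 0 1, by simp [EuclideanSpace.norm_single]⟩⟩

lemma isPt_const (d t : ℕ) (c : ℝ) : IsPt d t (fun _ => c) :=
  ⟨MvPolynomial.C c, by simp [MvPolynomial.totalDegree_C], fun x => by simp⟩

lemma IsPt.mono {d t t' : ℕ} {f : Sd d → ℝ} (h : IsPt d t f) (htt : t ≤ t') : IsPt d t' f :=
  ⟨h.choose, h.choose_spec.1.trans htt, h.choose_spec.2⟩

lemma IsPt.continuous {d t : ℕ} {f : Sd d → ℝ} (h : IsPt d t f) : Continuous f := by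
  obtain ⟨P, -, hP⟩ := h
  have hf : f = (fun v => MvPolynomial.eval v P) ∘ (fun x : Sd d => fun i => (x : Esp d) i) :=
    funext hP
  rw [hf]
  refine Continuous.comp (MvPolynomial.continuous_eval P) (continuous_pi fun i => ?_)
  exact (EuclideanSpace.proj (𝕜 := ℝ) i).continuous.comp continuous_subtype_val

lemma integrable_of_continuous {d : ℕ} {f : Sd d → ℝ} (h : Continuous f) :
    Integrable f (sphMeasure d) :=
  h.integrable_of_hasCompactSupport ((isClosed_tsupport f).isCompact)

lemma IsPt.integrable {d t : ℕ} {f : Sd d → ℝ} (h : IsPt d t f) :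
    Integrable f (sphMeasure d) :=
  integrable_of_continuous h.continuous

lemma IsPt.add {d t : ℕ} {f g : Sd d → ℝ} (hf : IsPt d t f) (hg : IsPt d t g) :
    IsPt d t (fun x => f x + g x) := by
  obtain ⟨P, hP, hPe⟩ := hf; obtain ⟨Q, hQ, hQe⟩ := hg
  exact ⟨P + Q, (MvPolynomial.totalDegree_add P Q).trans (max_le hP hQ),
    fun x => by simp [← hPe, ← hQe]⟩

lemma IsPt.const_mul {d t : ℕ} {f : Sd d → ℝ} (hf : IsPt d t f) (c : ℝ) :
    IsPt d t (fun x => c * f x) := by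
  obtain ⟨P, hP, hPe⟩ := hf
  refine ⟨MvPolynomial.C c * P, ?_, fun x => by simp [← hPe]⟩
  exact le_trans (MvPolynomial.totalDegree_mul _ _)
    (by simpa [MvPolynomial.totalDegree_C] using hP)

lemma IsPt.sub {d t : ℕ} {f g : Sd d → ℝ} (hf : IsPt d t f) (hg : IsPt d t g) :
    IsPt d t (fun x => f x - g x) := by
  have := hf.add (hg.const_mul (-1))
  simpa [sub_eq_add_neg] using this

lemma isPt_sum {d t : ℕ} {ι : Type*} (s : Finset ι) (f : ι → Sd d → ℝ)
    (h : ∀ i ∈ s, IsPt d t (f i)) : IsPt d t (fun x => ∑ i ∈ s, f i x) := by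
  classical
  induction s using Finset.induction with
  | empty => simpa using isPt_const d t 0
  | @insert a s ha ih =>
      have h1 : IsPt d t (fun x => f a x + ∑ i ∈ s, f i x) :=
        (h a (Finset.mem_insert_self a s)).add
          (ih fun i hi => h i (Finset.mem_insert_of_mem hi))
      simpa [Finset.sum_insert ha] using h1

lemma sum_hidx (d t : ℕ) (g : ℕ → ℕ → ℝ) :
    ∑ p : HIdx d t, g p.1.1 p.2.1 = ∑ ℓ ∈ range (t + 1), ∑ k ∈ range (Mdim d ℓ), g ℓ k := by
  rw [← Finset.univ_sigma_univ, Finset.sum_sigma]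
  rw [← Fin.sum_univ_eq_sum_range (fun ℓ => ∑ k ∈ range (Mdim d ℓ), g ℓ k) (t + 1)]
  exact Finset.sum_congr rfl fun ℓ _ => Fin.sum_univ_eq_sum_range (fun k => g ℓ.1 k) _

lemma mulVec_one_eq (d t N : ℕ) (Y : ℕ → ℕ → Sd d → ℝ) (X : Fin N → Sd d) (i : Fin N) :
    (Gmat d t N Y X).mulVec (fun _ => 1) i =
      ∑ ℓ ∈ range (t + 1), ∑ k ∈ range (Mdim d ℓ),
        (∑ j, Y ℓ k (X j)) * Y ℓ k (X i) := by
  rw [← sum_hidx d t (fun ℓ k => (∑ j, Y ℓ k (X j)) * Y ℓ k (X i))]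
  simp only [Matrix.mulVec, Gmat, Ymat, Matrix.mul_apply, Matrix.transpose_apply,
    dotProduct, mul_one]
  rw [Finset.sum_comm]
  refine Finset.sum_congr rfl fun p _ => ?_
  rw [Finset.sum_mul]
  exact Finset.sum_congr rfl fun j _ => mul_comm _ _

/-- for a fundamental system `X` with `N ≥ dim P_t`, `C_t(X) = 0` iff
`X` is a spherical `t`-design. -/
theorem Cvec_eq_zero_iff_design (d t N : ℕ)
    (hN : ∑ ℓ ∈ range (t + 1), Mdim d ℓ ≤ N)
    (X : Fin N → Sd d) (Y : ℕ → ℕ → Sd d → ℝ) (hY : IsONBHarmonics d t Y)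
    (hfund : IsFundamental d t N X) :
    Cvec d t N Y X = 0 ↔ IsDesign d t N X := by
  classical
  obtain ⟨x0⟩ := sd_nonempty d
  set μ := sphMeasure d with hμ
  -- N is positive
  have hN0 : 0 < N := by
    rcases Nat.eq_zero_or_pos N with h | h
    · exfalso
      subst h
      have h1 := hfund (fun _ => 1) (isPt_const d t 1) (fun j => j.elim0) x0
      norm_num at h1
    · exact h
  -- the row sums and the polynomial F
  set r : ℕ → ℕ → ℝ := fun ℓ k => ∑ j, Y ℓ k (X j) with hrdef
  set F : Sd d → ℝ :=
    fun x => ∑ ℓ ∈ range (t + 1), ∑ k ∈ range (Mdim d ℓ), r ℓ k * Y ℓ k x with hFdef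
  have hFX : ∀ i : Fin N, (Gmat d t N Y X).mulVec (fun _ => 1) i = F (X i) := by
    intro i
    rw [mulVec_one_eq]
  -- F is a polynomial of degree ≤ t
  have hFpt : IsPt d t F := by
    refine isPt_sum _ _ fun ℓ hℓ => isPt_sum _ _ fun k hk => ?_
    exact ((hY.poly ℓ (by simpa [Nat.lt_succ_iff] using hℓ) k
      (by simpa using hk)).mono (by simpa [Nat.lt_succ_iff] using hℓ)).const_mul _
  -- integrability of the basis functions
  have hYint : ∀ ℓ ≤ t, ∀ k < Mdim d ℓ, Integrable (Y ℓ k) μ := fun ℓ hℓ k hk =>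
    (hY.poly ℓ hℓ k hk).integrable
  have hYcont : ∀ ℓ ≤ t, ∀ k < Mdim d ℓ, Continuous (Y ℓ k) := fun ℓ hℓ k hk =>
    (hY.poly ℓ hℓ k hk).continuous
  -- integral of a function expanded in the basis
  have hIntExp : ∀ (c : ℕ → ℕ → ℝ) (f : Sd d → ℝ),
      (∀ x, f x = ∑ ℓ ∈ range (t + 1), ∑ k ∈ range (Mdim d ℓ), c ℓ k * Y ℓ k x) →
      ∫ x, f x ∂μ = ∑ ℓ ∈ range (t + 1), ∑ k ∈ range (Mdim d ℓ), c ℓ k * ∫ x, Y ℓ k x ∂μ := by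
    intro c f hc
    have h1 : ∫ x, f x ∂μ =
        ∫ x, ∑ ℓ ∈ range (t + 1), ∑ k ∈ range (Mdim d ℓ), c ℓ k * Y ℓ k x ∂μ := by
      congr 1; funext x; exact hc x
    rw [h1, integral_finset_sum]
    · refine Finset.sum_congr rfl fun ℓ hℓ => ?_
      rw [integral_finset_sum]
      · exact Finset.sum_congr rfl fun k hk => integral_const_mul _ _
      · intro k hk
        exact ((hYint ℓ (by simpa [Nat.lt_succ_iff] using hℓ) k (by simpa using hk)).const_mul _)
    · intro ℓ hℓ
      exact integrable_finset_sum _ fun k hk =>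
        ((hYint ℓ (by simpa [Nat.lt_succ_iff] using hℓ) k (by simpa using hk)).const_mul _)
  -- inner product of an expanded function with a basis function
  have hOrthoSum : ∀ (a : ℕ → ℕ → ℝ) (g : Sd d → ℝ),
      (∀ x, g x = ∑ ℓ ∈ range (t + 1), ∑ k ∈ range (Mdim d ℓ), a ℓ k * Y ℓ k x) →
      ∀ ℓ' ≤ t, ∀ k' < Mdim d ℓ', ∫ x, g x * Y ℓ' k' x ∂μ = a ℓ' k' := by
    intro a g hg ℓ' hℓ' k' hk'
    have h1 : ∫ x, g x * Y ℓ' k' x ∂μ =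
        ∫ x, ∑ ℓ ∈ range (t + 1), ∑ k ∈ range (Mdim d ℓ),
          a ℓ k * (Y ℓ k x * Y ℓ' k' x) ∂μ := by
      congr 1; funext x
      rw [hg x, Finset.sum_mul]
      refine Finset.sum_congr rfl fun ℓ _ => ?_
      rw [Finset.sum_mul]
      exact Finset.sum_congr rfl fun k _ => by ring
    have hint : ∀ ℓ ∈ range (t + 1), ∀ k ∈ range (Mdim d ℓ),
        Integrable (fun x => a ℓ k * (Y ℓ k x * Y ℓ' k' x)) μ := by
      intro ℓ hℓ k hk
      refine Integrable.const_mul ?_ _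
      exact integrable_of_continuous
        (((hYcont ℓ (by simpa [Nat.lt_succ_iff] using hℓ) k (by simpa using hk))).mul
          (hYcont ℓ' hℓ' k' hk'))
    rw [h1, integral_finset_sum _ (fun ℓ hℓ =>
      integrable_finset_sum _ fun k hk => hint ℓ hℓ k hk)]
    have h2 : ∀ ℓ ∈ range (t + 1), ∀ k ∈ range (Mdim d ℓ),
        ∫ x, a ℓ k * (Y ℓ k x * Y ℓ' k' x) ∂μ =
          if ℓ = ℓ' ∧ k = k' then a ℓ k else 0 := by
      intro ℓ hℓ k hk
      rw [integral_const_mul, hY.ortho ℓ (by simpa [Nat.lt_succ_iff] using hℓ) ℓ' hℓ'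
        k (by simpa using hk) k' hk']
      split <;> simp
    calc ∑ ℓ ∈ range (t + 1), ∫ x, ∑ k ∈ range (Mdim d ℓ),
            a ℓ k * (Y ℓ k x * Y ℓ' k' x) ∂μ
        = ∑ ℓ ∈ range (t + 1), ∑ k ∈ range (Mdim d ℓ),
            if ℓ = ℓ' ∧ k = k' then a ℓ k else 0 := by
          refine Finset.sum_congr rfl fun ℓ hℓ => ?_
          rw [integral_finset_sum _ fun k hk => hint ℓ hℓ k hk]
          exact Finset.sum_congr rfl fun k hk => h2 ℓ hℓ k hk
      _ = a ℓ' k' := by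
          rw [Finset.sum_eq_single ℓ']
          · rw [Finset.sum_eq_single k']
            · simp
            · intro k hk hkne; simp [hkne]
            · intro h; exact absurd (Finset.mem_range.mpr hk') h
          · intro ℓ hℓ hℓne
            apply Finset.sum_eq_zero
            intro k hk; simp [hℓne]
          · intro h; exact absurd (Finset.mem_range.mpr (Nat.lt_succ_of_le hℓ')) h
  -- Cvec vanishes iff F is constant on X
  have hCvec : Cvec d t N Y X = 0 ↔ ∀ i : Fin N, F (X i) = F (X ⟨0, hN0⟩) := by
    constructor
    · intro hC i
      obtain ⟨m, hm⟩ := i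
      match m with
      | 0 => rfl
      | Nat.succ m =>
        have hm' : m < N - 1 := by omega
        have h1 := congrFun hC ⟨m, hm'⟩
        simp only [Cvec, Pi.zero_apply] at h1
        rw [hFX, hFX] at h1
        have := sub_eq_zero.mp h1
        exact this.symm
    · intro h
      funext i
      simp only [Cvec, Pi.zero_apply]
      rw [hFX, hFX]
      simp [h]
  rw [hCvec]
  constructor
  · -- C = 0 → design
    intro hC
    set c : ℝ := F (X ⟨0, hN0⟩) with hcdef
    -- F is identically c
    have hF0 : ∀ x, F x = c := by
      have h1 := hfund (fun x => F x - c) (hFpt.sub (isPt_const d t c))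
        (fun j => by show F (X j) - c = 0; rw [hC j, sub_self])
      intro x
      have h2 : F x - c = 0 := h1 x
      linarith
    -- row sums in terms of integrals
    have hr_eq : ∀ ℓ ≤ t, ∀ k < Mdim d ℓ, r ℓ k = c * ∫ x, Y ℓ k x ∂μ := by
      intro ℓ hℓ k hk
      have h1 : ∫ x, F x * Y ℓ k x ∂μ = r ℓ k :=
        hOrthoSum r F (fun x => rfl) ℓ hℓ k hk
      have h2 : ∫ x, F x * Y ℓ k x ∂μ = c * ∫ x, Y ℓ k x ∂μ := by
        have : (fun x => F x * Y ℓ k x) = fun x => c * Y ℓ k x := by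
          funext x; rw [hF0 x]
        rw [this, integral_const_mul]
      linarith
    -- sums of polynomial values
    have hsum : ∀ f : Sd d → ℝ, IsPt d t f → ∑ j, f (X j) = c * ∫ x, f x ∂μ := by
      intro f hf
      obtain ⟨cf, hcf⟩ := hY.span f hf
      have h1 : ∑ j, f (X j) =
          ∑ ℓ ∈ range (t + 1), ∑ k ∈ range (Mdim d ℓ), cf ℓ k * r ℓ k := by
        calc ∑ j, f (X j)
            = ∑ j, ∑ ℓ ∈ range (t + 1), ∑ k ∈ range (Mdim d ℓ), cf ℓ k * Y ℓ k (X j) := by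
              exact Finset.sum_congr rfl fun j _ => hcf (X j)
          _ = ∑ ℓ ∈ range (t + 1), ∑ j, ∑ k ∈ range (Mdim d ℓ), cf ℓ k * Y ℓ k (X j) :=
              Finset.sum_comm
          _ = ∑ ℓ ∈ range (t + 1), ∑ k ∈ range (Mdim d ℓ), cf ℓ k * r ℓ k := by
              refine Finset.sum_congr rfl fun ℓ _ => ?_
              rw [Finset.sum_comm]
              refine Finset.sum_congr rfl fun k _ => ?_
              rw [← Finset.mul_sum]
      rw [h1, hIntExp cf f hcf, Finset.mul_sum]
      refine Finset.sum_congr rfl fun ℓ hℓ => ?_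
      rw [Finset.mul_sum]
      refine Finset.sum_congr rfl fun k hk => ?_
      rw [hr_eq ℓ (by simpa [Nat.lt_succ_iff] using hℓ) k (by simpa using hk)]
      ring
    -- with f = 1 : N = c * ω
    have hNω : (N : ℝ) = c * omega d := by
      have h1 := hsum (fun _ => 1) (isPt_const d t 1)
      simp only [integral_const, smul_eq_mul, mul_one, Finset.sum_const,
        Finset.card_univ, Fintype.card_fin, nsmul_eq_mul] at h1
      simpa [omega, hμ, Measure.real] using h1
    have hcω : c * omega d ≠ 0 := by
      rw [← hNω]
      exact_mod_cast Nat.cast_ne_zero.mpr hN0.ne'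
    have hc : c ≠ 0 := fun h => hcω (by rw [h, zero_mul])
    have hω : omega d ≠ 0 := fun h => hcω (by rw [h, mul_zero])
    -- conclude design property
    intro f hf
    rw [hsum f hf, hNω, hμ]
    rw [mul_div_mul_left _ _ hc]
  · -- design → C = 0
    intro hD
    have hωpos : omega d ≠ 0 := by
      have h1 := hD (fun _ => 1) (isPt_const d t 1)
      simp only [integral_const, smul_eq_mul, mul_one, Finset.sum_const,
        Finset.card_univ, Fintype.card_fin, nsmul_eq_mul] at h1
      have hNne : (N : ℝ) ≠ 0 := Nat.cast_ne_zero.mpr hN0.ne'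
      rw [div_self hNne] at h1
      intro h
      rw [show (sphMeasure d).real Set.univ = omega d from rfl, h] at h1
      simp at h1
    -- row sums from the design property
    have hr : ∀ ℓ ≤ t, ∀ k < Mdim d ℓ,
        r ℓ k = (N : ℝ) / omega d * ∫ x, Y ℓ k x ∂μ := by
      intro ℓ hℓ k hk
      have h1 := hD (Y ℓ k) ((hY.poly ℓ hℓ k hk).mono hℓ)
      have hNne : (N : ℝ) ≠ 0 := Nat.cast_ne_zero.mpr hN0.ne'
      have : r ℓ k / N = (∫ x, Y ℓ k x ∂μ) / omega d := h1
      field_simp at this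
      rw [div_mul_eq_mul_div, eq_div_iff hωpos]
      linarith [this]
    -- expansion of the constant 1
    obtain ⟨a, ha⟩ := hY.span (fun _ => 1) (isPt_const d t 1)
    have haI : ∀ ℓ ≤ t, ∀ k < Mdim d ℓ, ∫ x, Y ℓ k x ∂μ = a ℓ k := by
      intro ℓ hℓ k hk
      have h1 := hOrthoSum a (fun _ => 1) ha ℓ hℓ k hk
      simpa using h1
    -- F is constant
    have hFconst : ∀ i : Fin N, F (X i) = (N : ℝ) / omega d := by
      intro i
      calc F (X i)
          = ∑ ℓ ∈ range (t + 1), ∑ k ∈ range (Mdim d ℓ),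
              (N : ℝ) / omega d * (a ℓ k * Y ℓ k (X i)) := by
            refine Finset.sum_congr rfl fun ℓ hℓ => Finset.sum_congr rfl fun k hk => ?_
            rw [hr ℓ (by simpa [Nat.lt_succ_iff] using hℓ) k (by simpa using hk),
              haI ℓ (by simpa [Nat.lt_succ_iff] using hℓ) k (by simpa using hk)]
            ring
        _ = (N : ℝ) / omega d *
              ∑ ℓ ∈ range (t + 1), ∑ k ∈ range (Mdim d ℓ), a ℓ k * Y ℓ k (X i) := by
            rw [Finset.mul_sum]
            exact Finset.sum_congr rfl fun ℓ _ => (Finset.mul_sum _ _ _).symm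
        _ = (N : ℝ) / omega d := by rw [← ha (X i), mul_one]
    intro i
    rw [hFconst, hFconst]
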